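/- arXiv:2005.02340 — 4 statements merged into one kernel-verified Lean document; each statement's English description precedes it below -/
import Mathlib

section
/- Let E₂(τ) = 1 - 24∑_{n≥1} σ₁(n)qⁿ and E₄(τ) = 1 + 240∑_{n≥1} σ₃(n)qⁿ with q = exp(2πiτ), τ in the upper half-plane. Assuming the Ramanujan identity (1/(2πi))·dE₂/dτ = (E₂² - E₄)/12, the function f₆(τ) = ∫_i^τ η(z)⁴ dz, where η is the Dedekind eta function (so that E₂ = (12/(πi))·η'/η), satisfies the Schwarzian equation {f₆, τ} = (2π²/36)·E₄(τ). -/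
open Complex

noncomputable def schwarzian (f : ℂ → ℂ) (z : ℂ) : ℂ :=
  deriv (deriv (deriv f)) z / deriv f z - 3 / 2 * (deriv (deriv f) z / deriv f z) ^ 2

/-- The Dedekind eta function `η(τ) = q^{1/24} ∏_{n≥1} (1 - qⁿ)`, `q = exp(2πiτ)`. -/
noncomputable def dedekindEta (τ : ℂ) : ℂ :=
  Complex.exp (Real.pi * Complex.I * τ / 12) *
    ∏' n : ℕ, (1 - Complex.exp (2 * Real.pi * Complex.I * τ) ^ (n + 1))

/-- The weight 2 Eisenstein series `E₂(τ) = 1 - 24 ∑_{n≥1} σ₁(n) qⁿ`. -/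
noncomputable def Eis₂ (τ : ℂ) : ℂ :=
  1 - 24 * ∑' n : ℕ, (ArithmeticFunction.sigma 1 (n + 1) : ℂ) *
    Complex.exp (2 * Real.pi * Complex.I * τ) ^ (n + 1)

/-- The weight 4 Eisenstein series `E₄(τ) = 1 + 240 ∑_{n≥1} σ₃(n) qⁿ`. -/
noncomputable def Eis₄ (τ : ℂ) : ℂ :=
  1 + 240 * ∑' n : ℕ, (ArithmeticFunction.sigma 3 (n + 1) : ℂ) *
    Complex.exp (2 * Real.pi * Complex.I * τ) ^ (n + 1)

theorem stmt_5 (Ω : Set ℂ) (hΩ : Ω = {z : ℂ | 0 < z.im})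
    (hη : AnalyticOn ℂ dedekindEta Ω)
    (hηne : ∀ τ ∈ Ω, dedekindEta τ ≠ 0)
    (hE₂eta : ∀ τ ∈ Ω, Eis₂ τ =
      12 / (Real.pi * Complex.I) * (deriv dedekindEta τ / dedekindEta τ))
    (hRamanujan : ∀ τ ∈ Ω,
      1 / (2 * Real.pi * Complex.I) * deriv Eis₂ τ = (Eis₂ τ ^ 2 - Eis₄ τ) / 12)
    (f₆ : ℂ → ℂ) (hf₆ : AnalyticOn ℂ f₆ Ω)
    (hf₆' : ∀ τ ∈ Ω, deriv f₆ τ = dedekindEta τ ^ 4) :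
    ∀ τ ∈ Ω, schwarzian f₆ τ = 2 * Real.pi ^ 2 / 36 * Eis₄ τ := by
  have hopen : IsOpen Ω := by
    rw [hΩ]; exact isOpen_lt continuous_const Complex.continuous_im
  have hηN : AnalyticOnNhd ℂ dedekindEta Ω :=
    (hopen.analyticOn_iff_analyticOnNhd).mp hη
  have hηN' : AnalyticOnNhd ℂ (deriv dedekindEta) Ω := hηN.deriv
  have hd : ∀ z ∈ Ω, DifferentiableAt ℂ dedekindEta z :=
    fun z hz => (hηN z hz).differentiableAt
  have hd' : ∀ z ∈ Ω, DifferentiableAt ℂ (deriv dedekindEta) z :=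
    fun z hz => (hηN' z hz).differentiableAt
  -- second derivative of f₆
  have h2 : ∀ z ∈ Ω, deriv (deriv f₆) z =
      4 * dedekindEta z ^ 3 * deriv dedekindEta z := by
    intro z hz
    have hev : deriv f₆ =ᶠ[nhds z] fun w => dedekindEta w ^ 4 :=
      Filter.eventuallyEq_of_mem (hopen.mem_nhds hz) hf₆'
    rw [hev.deriv_eq]
    have := ((hd z hz).hasDerivAt.pow 4).deriv
    show deriv (dedekindEta ^ 4) z = _
    rw [this]; push_cast; ring
  intro τ hτ
  set e := dedekindEta τ with he
  set d1 := deriv dedekindEta τ with hd1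
  set d2 := deriv (deriv dedekindEta) τ with hd2
  have hene : e ≠ 0 := hηne τ hτ
  have hπ : (Real.pi : ℂ) ≠ 0 := by
    exact_mod_cast Real.pi_ne_zero
  have hI : Complex.I ≠ 0 := Complex.I_ne_zero
  -- third derivative of f₆
  have h3 : deriv (deriv (deriv f₆)) τ =
      12 * e ^ 2 * d1 ^ 2 + 4 * e ^ 3 * d2 := by
    have hev : deriv (deriv f₆) =ᶠ[nhds τ]
        fun w => 4 * dedekindEta w ^ 3 * deriv dedekindEta w :=
      Filter.eventuallyEq_of_mem (hopen.mem_nhds hτ) h2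
    rw [hev.deriv_eq]
    have H : HasDerivAt (fun w => 4 * dedekindEta w ^ 3 * deriv dedekindEta w)
        ((4 * ((3 : ℕ) * e ^ 2 * d1)) * d1 + (4 * e ^ 3) * d2) τ := by
      exact (((hd τ hτ).hasDerivAt.pow 3).const_mul 4).mul (hd' τ hτ).hasDerivAt
    rw [H.deriv]; push_cast; ring
  -- derivative of E₂ via η
  have hE2' : deriv Eis₂ τ =
      12 / (Real.pi * Complex.I) * ((d2 * e - d1 * d1) / e ^ 2) := by
    have hev : Eis₂ =ᶠ[nhds τ]
        fun w => 12 / (Real.pi * Complex.I) * (deriv dedekindEta w / dedekindEta w) :=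
      Filter.eventuallyEq_of_mem (hopen.mem_nhds hτ) hE₂eta
    rw [hev.deriv_eq]
    have H : HasDerivAt (fun w => 12 / (Real.pi * Complex.I) *
        (deriv dedekindEta w / dedekindEta w))
        (12 / (Real.pi * Complex.I) * ((d2 * e - d1 * d1) / e ^ 2)) τ :=
      (((hd' τ hτ).hasDerivAt.div (hd τ hτ).hasDerivAt hene)).const_mul _
    exact H.deriv
  -- assemble
  have hR := hRamanujan τ hτ
  rw [hE2'] at hR
  have hE2 := hE₂eta τ hτ
  rw [← hd1, ← he] at hE2
  have hI2 : Complex.I ^ 2 = -1 := Complex.I_sq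
  rw [schwarzian, h3, h2 τ hτ, hf₆' τ hτ]
  set E2 := Eis₂ τ
  set E4 := Eis₄ τ
  field_simp at hR hE2
  have key : 4*e^3*d2 - 12*e^2*d1^2 = (Real.pi:ℂ)^2 * E4 * e^4 / 18 := by
    linear_combination (e^2/36) * hR
      + ((E2*(Real.pi:ℂ)*Complex.I*e + 12*d1) * e^2 / 18) * hE2
      + (-((Real.pi:ℂ)^2*E4*e^4/18)) * hI2
  field_simp
  rw [← he, ← hd1, div_eq_iff (pow_ne_zero 4 hene)]
  linear_combination (72) * key
end

section
/- Fix n ≥ 1 and a, b, c > 0, and let U = {x ∈ ℝⁿ : 0 < x₁ < ... < xₙ < 1} with fᵢ(x) = a/(1-xᵢ) - b/xᵢ - ∑_{j≠i} c/(xᵢ-xⱼ). For every boundary point v ∈ ∂U and every sequence (uₖ) in U converging to v, there exists an index i ∈ {1,...,n} such that |fᵢ(uₖ)| → ∞ as k → ∞. -/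
open Finset Filter

theorem stmt_13 (n : ℕ) (hn : 1 ≤ n) (a b c : ℝ) (ha : 0 < a) (hb : 0 < b) (hc : 0 < c)
    (f : Fin n → (Fin n → ℝ) → ℝ)
    (hf : ∀ i x, f i x = a / (1 - x i) - b / x i - ∑ j ∈ univ.erase i, c / (x i - x j))
    (U : Set (Fin n → ℝ))
    (hU : U = {x : Fin n → ℝ | (∀ i, 0 < x i ∧ x i < 1) ∧ StrictMono x})
    (v : Fin n → ℝ) (hv : v ∈ frontier U)
    (u : ℕ → (Fin n → ℝ)) (hu : ∀ k, u k ∈ U)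
    (hlim : Tendsto u atTop (nhds v)) :
    ∃ i : Fin n, Tendsto (fun k => |f i (u k)|) atTop atTop := by
  classical
  have hUopen : IsOpen U := by
    rw [hU]
    have h1 : IsOpen {x : Fin n → ℝ | ∀ i, 0 < x i ∧ x i < 1} := by
      rw [Set.setOf_forall]
      refine isOpen_iInter_of_finite fun i => ?_
      exact (isOpen_lt continuous_const (continuous_apply i)).inter
        (isOpen_lt (continuous_apply i) continuous_const)
    have h2 : IsOpen {x : Fin n → ℝ | StrictMono x} := by
      have he : {x : Fin n → ℝ | StrictMono x}
          = ⋂ (i : Fin n), ⋂ (j : Fin n), {x : Fin n → ℝ | i < j → x i < x j} := by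
        ext x; simp [StrictMono, Set.mem_iInter]
      rw [he]
      refine isOpen_iInter_of_finite fun i => isOpen_iInter_of_finite fun j => ?_
      by_cases hij : i < j
      · have : {x : Fin n → ℝ | i < j → x i < x j} = {x : Fin n → ℝ | x i < x j} := by
          ext x; simp [hij]
        rw [this]; exact isOpen_lt (continuous_apply i) (continuous_apply j)
      · have : {x : Fin n → ℝ | i < j → x i < x j} = Set.univ := by
          ext x; simp [hij]
        rw [this]; exact isOpen_univ
    exact h1.inter h2
  have hvnot : v ∉ U := by
    intro hvU
    have := hv.2
    rw [hUopen.interior_eq] at this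
    exact this hvU
  have hcoord : ∀ i, Tendsto (fun k => u k i) atTop (nhds (v i)) := tendsto_pi_nhds.mp hlim
  have hu' : ∀ k, (∀ i, 0 < u k i ∧ u k i < 1) ∧ StrictMono (u k) := by
    intro k; have := hu k; rwa [hU] at this
  have hv0 : ∀ i, 0 ≤ v i := fun i =>
    ge_of_tendsto' (hcoord i) (fun k => ((hu' k).1 i).1.le)
  have hv1 : ∀ i, v i ≤ 1 := fun i =>
    le_of_tendsto' (hcoord i) (fun k => ((hu' k).1 i).2.le)
  have hmono : Monotone v := by
    intro i j hij
    rcases eq_or_lt_of_le hij with h | h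
    · rw [h]
    · exact le_of_tendsto_of_tendsto' (hcoord i) (hcoord j) fun k => ((hu' k).2 h).le
  rw [hU] at hvnot
  have hdivtop : ∀ (r : ℝ), 0 < r → ∀ (g : ℕ → ℝ), (∀ k, 0 < g k) →
      Tendsto g atTop (nhds 0) → Tendsto (fun k => r / g k) atTop atTop := by
    intro r hr g hg hg0
    have h1 : Tendsto g atTop (nhdsWithin 0 (Set.Ioi 0)) :=
      tendsto_nhdsWithin_of_tendsto_nhds_of_eventually_within g hg0
        (Eventually.of_forall hg)
    have h2 := tendsto_inv_nhdsGT_zero.comp h1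
    have h3 := Filter.Tendsto.const_mul_atTop hr h2
    simpa [div_eq_mul_inv, Function.comp_def] using h3
  have sum_ge : ∀ (s t : Finset (Fin n)) (g : Fin n → ℝ), s ⊆ t →
      (∀ j ∈ t, j ∉ s → g j ≤ 0) → ∑ j ∈ t, g j ≤ ∑ j ∈ s, g j := by
    intro s t g hst h
    have h2 := Finset.sum_le_sum_of_subset_of_nonneg (f := fun j => -g j) hst
      (fun j hj hj' => neg_nonneg.mpr (h j hj hj'))
    simp only [Finset.sum_neg_distrib] at h2
    linarith
  by_cases h0 : ∃ i, v i = 0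
  · -- largest index with v i = 0 ; f i → -∞
    obtain ⟨i0, hi0⟩ := h0
    have hSne : (univ.filter (fun j : Fin n => v j = 0)).Nonempty := ⟨i0, by simp [hi0]⟩
    obtain ⟨i, hvi, hmax⟩ : ∃ i : Fin n, v i = 0 ∧ ∀ j, v j = 0 → j ≤ i := by
      refine ⟨(univ.filter (fun j : Fin n => v j = 0)).max' hSne, ?_, ?_⟩
      · have hm := Finset.max'_mem _ hSne
        rw [Finset.mem_filter] at hm
        exact hm.2
      · intro j hj
        exact Finset.le_max' _ j (by rw [Finset.mem_filter]; exact ⟨Finset.mem_univ _, hj⟩)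
    have hgt : ∀ j, i < j → 0 < v j := by
      intro j hj
      rcases (hv0 j).lt_or_eq with h | h
      · exact h
      · exact absurd (hmax j h.symm) (not_le.mpr hj)
    refine ⟨i, ?_⟩
    set T : Finset (Fin n) := univ.filter (fun j => i < j) with hT
    have key : Tendsto (fun k => f i (u k)) atTop atBot := by
      have hbound : ∀ k, f i (u k) ≤
          (a / (1 - u k i) - ∑ j ∈ T, c / (u k i - u k j)) + -(b / u k i) := by
        intro k
        rw [hf]
        have hsub : T ⊆ univ.erase i := by
          intro j hj
          rw [hT, Finset.mem_filter] at hj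
          exact Finset.mem_erase.mpr ⟨(hj.2).ne', Finset.mem_univ _⟩
        have hnn : ∀ j ∈ univ.erase i, j ∉ T → 0 ≤ c / (u k i - u k j) := by
          intro j hj hjT
          rw [Finset.mem_erase] at hj
          rw [hT, Finset.mem_filter] at hjT
          push_neg at hjT
          have hji : j < i := lt_of_le_of_ne (hjT (Finset.mem_univ _)) hj.1
          have := (hu' k).2 hji
          exact (div_pos hc (sub_pos.mpr this)).le
        have hle := Finset.sum_le_sum_of_subset_of_nonneg hsub hnn
        linarith
      have hA : Tendsto (fun k => a / (1 - u k i)) atTop (nhds (a / (1 - v i))) :=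
        Filter.Tendsto.div tendsto_const_nhds (tendsto_const_nhds.sub (hcoord i))
          (by rw [hvi]; norm_num)
      have hTsum : Tendsto (fun k => ∑ j ∈ T, c / (u k i - u k j)) atTop
          (nhds (∑ j ∈ T, c / (v i - v j))) := by
        refine tendsto_finset_sum _ fun j hj => ?_
        rw [hT, Finset.mem_filter] at hj
        have : v i - v j < 0 := by
          have := hgt j hj.2
          rw [hvi]; linarith
        exact Filter.Tendsto.div tendsto_const_nhds ((hcoord i).sub (hcoord j)) this.ne
      have hB : Tendsto (fun k => b / u k i) atTop atTop :=
        hdivtop b hb _ (fun k => ((hu' k).1 i).1) (hvi ▸ hcoord i)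
      have hBneg : Tendsto (fun k => -(b / u k i)) atTop atBot :=
        tendsto_neg_atTop_atBot.comp hB
      exact tendsto_atBot_mono hbound ((hA.sub hTsum).add_atBot hBneg)
    have := tendsto_abs_atBot_atTop.comp key
    simpa [Function.comp_def] using this
  · push_neg at h0
    have hvpos : ∀ i, 0 < v i := fun i => lt_of_le_of_ne (hv0 i) (Ne.symm (h0 i))
    by_cases h1 : ∃ i, v i = 1
    · -- smallest index with v i = 1 ; f i → +∞
      obtain ⟨i1, hi1⟩ := h1
      have hSne : (univ.filter (fun j : Fin n => v j = 1)).Nonempty := ⟨i1, by simp [hi1]⟩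
      obtain ⟨i, hvi, hmin⟩ : ∃ i : Fin n, v i = 1 ∧ ∀ j, v j = 1 → i ≤ j := by
        refine ⟨(univ.filter (fun j : Fin n => v j = 1)).min' hSne, ?_, ?_⟩
        · have hm := Finset.min'_mem _ hSne
          rw [Finset.mem_filter] at hm
          exact hm.2
        · intro j hj
          exact Finset.min'_le _ j (by rw [Finset.mem_filter]; exact ⟨Finset.mem_univ _, hj⟩)
      have hlt : ∀ j, j < i → v j < 1 := by
        intro j hj
        rcases (hv1 j).lt_or_eq with h | h
        · exact h
        · exact absurd (hmin j h) (not_le.mpr hj)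
      refine ⟨i, ?_⟩
      set T : Finset (Fin n) := univ.filter (fun j => j < i) with hT
      have key : Tendsto (fun k => f i (u k)) atTop atTop := by
        have hbound : ∀ k,
            (-(b / u k i) - ∑ j ∈ T, c / (u k i - u k j)) + a / (1 - u k i)
              ≤ f i (u k) := by
          intro k
          rw [hf]
          have hsub : T ⊆ univ.erase i := by
            intro j hj
            rw [hT, Finset.mem_filter] at hj
            exact Finset.mem_erase.mpr ⟨(hj.2).ne, Finset.mem_univ _⟩
          have hnp : ∀ j ∈ univ.erase i, j ∉ T → c / (u k i - u k j) ≤ 0 := by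
            intro j hj hjT
            rw [Finset.mem_erase] at hj
            rw [hT, Finset.mem_filter] at hjT
            push_neg at hjT
            have hij : i < j := lt_of_le_of_ne (hjT (Finset.mem_univ _)) hj.1.symm
            have := (hu' k).2 hij
            exact (div_neg_of_pos_of_neg hc (by linarith)).le
          have hle := sum_ge T (univ.erase i) _ hsub hnp
          linarith
        have hB : Tendsto (fun k => -(b / u k i)) atTop (nhds (-(b / v i))) :=
          (Filter.Tendsto.div tendsto_const_nhds (hcoord i)
            (by rw [hvi]; norm_num)).neg
        have hTsum : Tendsto (fun k => ∑ j ∈ T, c / (u k i - u k j)) atTop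
            (nhds (∑ j ∈ T, c / (v i - v j))) := by
          refine tendsto_finset_sum _ fun j hj => ?_
          rw [hT, Finset.mem_filter] at hj
          have : 0 < v i - v j := by
            have := hlt j hj.2
            rw [hvi]; linarith
          exact Filter.Tendsto.div tendsto_const_nhds ((hcoord i).sub (hcoord j)) this.ne'
        have hA : Tendsto (fun k => a / (1 - u k i)) atTop atTop := by
          refine hdivtop a ha _ (fun k => sub_pos.mpr ((hu' k).1 i).2) ?_
          have h5 := (tendsto_const_nhds :
            Tendsto (fun _ : ℕ => (1:ℝ)) atTop (nhds 1)).sub (hcoord i)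
          rw [hvi, sub_self] at h5
          exact h5
        exact tendsto_atTop_mono hbound ((hB.sub hTsum).add_atTop hA)
      have := tendsto_abs_atTop_atTop.comp key
      simpa [Function.comp_def] using this
    · -- adjacent coordinates of v coincide ; f i → +∞ for the smallest such i
      push_neg at h1
      have hvlt1 : ∀ i, v i < 1 := fun i => lt_of_le_of_ne (hv1 i) (h1 i)
      have hnsm : ¬ StrictMono v := by
        intro h
        exact hvnot ⟨fun i => ⟨hvpos i, hvlt1 i⟩, h⟩
      have hpair : ∃ p : Fin n, ∃ p' : Fin n, p'.val = p.val + 1 ∧ v p = v p' := by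
        rw [StrictMono] at hnsm
        push_neg at hnsm
        obtain ⟨p, q, hpq, hle⟩ := hnsm
        have hq : p.val + 1 ≤ q.val := Fin.lt_def.mp hpq
        have hp1 : p.val + 1 < n := lt_of_le_of_lt hq q.isLt
        refine ⟨p, ⟨p.val + 1, hp1⟩, rfl, ?_⟩
        have h1' : v p ≤ v ⟨p.val + 1, hp1⟩ := hmono (by simp [Fin.le_def])
        have h2' : v ⟨p.val + 1, hp1⟩ ≤ v q := hmono (by simpa [Fin.le_def] using hq)
        exact le_antisymm h1' (le_trans h2' hle)
      have hSne : (univ.filter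
          (fun j : Fin n => ∃ j' : Fin n, j'.val = j.val + 1 ∧ v j = v j')).Nonempty := by
        obtain ⟨p, hp⟩ := hpair
        exact ⟨p, by rw [Finset.mem_filter]; exact ⟨Finset.mem_univ _, hp⟩⟩
      obtain ⟨i, ⟨i', hi'val, hieq⟩, hmin⟩ : ∃ i : Fin n,
          (∃ i' : Fin n, i'.val = i.val + 1 ∧ v i = v i') ∧
          ∀ j, (∃ j' : Fin n, j'.val = j.val + 1 ∧ v j = v j') → i ≤ j := by
        refine ⟨(univ.filter _).min' hSne, ?_, ?_⟩
        · have hm := Finset.min'_mem _ hSne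
          rw [Finset.mem_filter] at hm
          exact hm.2
        · intro j hj
          exact Finset.min'_le _ j (by rw [Finset.mem_filter]; exact ⟨Finset.mem_univ _, hj⟩)
      have hii' : i < i' := by
        rw [Fin.lt_def, hi'val]
        omega
      have hlt : ∀ j, j < i → v j < v i := by
        intro j hj
        have hjn : j.val + 1 ≤ i.val := Fin.lt_def.mp hj
        have hj1 : j.val + 1 < n := lt_of_le_of_lt hjn i.isLt
        have hne : v j ≠ v ⟨j.val + 1, hj1⟩ := by
          intro hcontra
          exact absurd (hmin j ⟨⟨j.val + 1, hj1⟩, rfl, hcontra⟩) (not_le.mpr hj)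
        have hle1 : v j ≤ v ⟨j.val + 1, hj1⟩ := hmono (by simp [Fin.le_def])
        have hle2 : v ⟨j.val + 1, hj1⟩ ≤ v i := hmono (by simpa [Fin.le_def] using hjn)
        exact lt_of_lt_of_le (hle1.lt_of_ne hne) hle2
      refine ⟨i, ?_⟩
      set T : Finset (Fin n) := univ.filter (fun j => j < i) with hT
      have hi'T : i' ∉ T := by
        rw [hT, Finset.mem_filter]
        rintro ⟨-, h⟩
        exact absurd h (not_lt.mpr hii'.le)
      have key : Tendsto (fun k => f i (u k)) atTop atTop := by
        have hbound : ∀ k,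
            ((a / (1 - u k i) - b / u k i) - ∑ j ∈ T, c / (u k i - u k j))
              + c / (u k i' - u k i) ≤ f i (u k) := by
          intro k
          rw [hf]
          have hsub : insert i' T ⊆ univ.erase i := by
            intro j hj
            rw [Finset.mem_insert] at hj
            rcases hj with rfl | hj
            · exact Finset.mem_erase.mpr ⟨hii'.ne', Finset.mem_univ _⟩
            · rw [hT, Finset.mem_filter] at hj
              exact Finset.mem_erase.mpr ⟨(hj.2).ne, Finset.mem_univ _⟩
          have hnp : ∀ j ∈ univ.erase i, j ∉ insert i' T → c / (u k i - u k j) ≤ 0 := by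
            intro j hj hjT
            rw [Finset.mem_erase] at hj
            rw [Finset.mem_insert, hT, Finset.mem_filter] at hjT
            push_neg at hjT
            have hij : i < j := lt_of_le_of_ne (hjT.2 (Finset.mem_univ _)) hj.1.symm
            have := (hu' k).2 hij
            exact (div_neg_of_pos_of_neg hc (by linarith)).le
          have hle := sum_ge (insert i' T) (univ.erase i) _ hsub hnp
          rw [Finset.sum_insert hi'T] at hle
          have hrw : c / (u k i - u k i') = -(c / (u k i' - u k i)) := by
            rw [show u k i - u k i' = -(u k i' - u k i) by ring, div_neg]
          linarith
        have hA : Tendsto (fun k => a / (1 - u k i)) atTop (nhds (a / (1 - v i))) :=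
          Filter.Tendsto.div tendsto_const_nhds (tendsto_const_nhds.sub (hcoord i))
            (sub_ne_zero.mpr (hvlt1 i).ne')
        have hB : Tendsto (fun k => b / u k i) atTop (nhds (b / v i)) :=
          Filter.Tendsto.div tendsto_const_nhds (hcoord i) (hvpos i).ne'
        have hTsum : Tendsto (fun k => ∑ j ∈ T, c / (u k i - u k j)) atTop
            (nhds (∑ j ∈ T, c / (v i - v j))) := by
          refine tendsto_finset_sum _ fun j hj => ?_
          rw [hT, Finset.mem_filter] at hj
          have : 0 < v i - v j := sub_pos.mpr (hlt j hj.2)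
          exact Filter.Tendsto.div tendsto_const_nhds ((hcoord i).sub (hcoord j)) this.ne'
        have hlast : Tendsto (fun k => c / (u k i' - u k i)) atTop atTop := by
          refine hdivtop c hc _ (fun k => sub_pos.mpr ((hu' k).2 hii')) ?_
          have h5 := (hcoord i').sub (hcoord i)
          rw [← hieq, sub_self] at h5
          exact h5
        exact tendsto_atTop_mono hbound (((hA.sub hB).sub hTsum).add_atTop hlast)
      have := tendsto_abs_atTop_atTop.comp key
      simpa [Function.comp_def] using this
end

section
/- For every integer n ≥ 1 and all reals a, b, c > 0, the system of equations a/(1-xᵢ) - b/xᵢ = ∑_{j≠i} c/(xᵢ - xⱼ), 1 ≤ i ≤ n, has a solution (x₁,...,xₙ) with 0 < x₁ < x₂ < ... < xₙ < 1. -/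
open Finset

theorem stmt_14 (n : ℕ) (hn : 1 ≤ n) (a b c : ℝ) (ha : 0 < a) (hb : 0 < b) (hc : 0 < c) :
    ∃ x : Fin n → ℝ, (∀ i, 0 < x i ∧ x i < 1) ∧ StrictMono x ∧
      ∀ i, a / (1 - x i) - b / x i = ∑ j ∈ univ.erase i, c / (x i - x j) := by
  classical
  have hc2 : (0:ℝ) < c / 2 := by positivity
  set G : (Fin n → ℝ) → ℝ := fun x =>
    ∏ j, ((x j) ^ b * (1 - x j) ^ a * ∏ k ∈ univ.erase j, |x j - x k| ^ (c/2)) with hGdef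
  set K : Set (Fin n → ℝ) := Set.Icc 0 1 ∩ {x | Monotone x} with hKdef
  -- K is compact
  have hMclosed : IsClosed {x : Fin n → ℝ | Monotone x} := by
    have hrw : {x : Fin n → ℝ | Monotone x}
        = ⋂ (p : Fin n × Fin n), ⋂ (_ : p.1 ≤ p.2), {x : Fin n → ℝ | x p.1 ≤ x p.2} := by
      ext x
      simp only [Set.mem_setOf_eq, Set.mem_iInter]
      exact ⟨fun H p hp => H hp, fun H i j hij => H (i, j) hij⟩
    rw [hrw]
    exact isClosed_iInter fun p => isClosed_iInter fun _ =>
      isClosed_le (continuous_apply _) (continuous_apply _)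
  have hKcomp : IsCompact K := isCompact_Icc.inter_right hMclosed
  -- G is continuous
  have hGcont : Continuous G := by
    apply continuous_finset_prod
    intro j _
    apply Continuous.mul
    · exact ((continuous_apply j).rpow_const fun x => Or.inr hb.le).mul
        ((continuous_const.sub (continuous_apply j)).rpow_const fun x => Or.inr ha.le)
    · apply continuous_finset_prod
      intro k _
      exact (((continuous_apply j).sub (continuous_apply k)).abs).rpow_const
        fun x => Or.inr hc2.le
  -- witness with positive G
  set x₀ : Fin n → ℝ := fun i => ((i : ℕ) + 1 : ℝ) / (n + 1) with hx0def
  have hx0pos : ∀ i, 0 < x₀ i := fun i => by simp only [hx0def]; positivity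
  have hx0lt1 : ∀ i, x₀ i < 1 := by
    intro i
    simp only [hx0def]
    rw [div_lt_one (by positivity)]
    have := i.isLt
    push_cast
    have h2 : ((i : ℕ) : ℝ) < n := by exact_mod_cast this
    linarith
  have hx0sm : StrictMono x₀ := by
    intro p q hpq
    simp only [hx0def]
    have hh : (p : ℕ) < (q : ℕ) := hpq
    have hd : (0:ℝ) < (n:ℝ) + 1 := by positivity
    rw [div_lt_div_iff_of_pos_right hd]
    have h2 : ((p : ℕ) : ℝ) < (q : ℕ) := by exact_mod_cast hh
    linarith
  have hx0K : x₀ ∈ K := by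
    refine ⟨Set.mem_Icc.2 ⟨Pi.le_def.mpr fun i => ?_, Pi.le_def.mpr fun i => ?_⟩,
      hx0sm.monotone⟩
    · simpa using (hx0pos i).le
    · simpa using (hx0lt1 i).le
  have hGx0 : 0 < G x₀ := by
    simp only [hGdef]
    apply Finset.prod_pos
    intro j _
    have h1 := Real.rpow_pos_of_pos (hx0pos j) b
    have h2 := Real.rpow_pos_of_pos (by linarith [hx0lt1 j] : (0:ℝ) < 1 - x₀ j) a
    have h3 : 0 < ∏ k ∈ univ.erase j, |x₀ j - x₀ k| ^ (c/2) := by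
      apply Finset.prod_pos
      intro k hk
      have hkj : k ≠ j := (Finset.mem_erase.1 hk).1
      exact Real.rpow_pos_of_pos
        (abs_pos.2 (sub_ne_zero.2 fun e => hkj (hx0sm.injective e).symm)) _
    exact mul_pos (mul_pos h1 h2) h3
  -- maximize
  obtain ⟨z, hzK, hzmax⟩ := hKcomp.exists_isMaxOn ⟨x₀, hx0K⟩ hGcont.continuousOn
  have hGz : 0 < G z := lt_of_lt_of_le hGx0 (hzmax hx0K)
  have hGz_ne : G z ≠ 0 := ne_of_gt hGz
  have hz01 : ∀ i, 0 ≤ z i ∧ z i ≤ 1 := by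
    intro i
    have h1 := hzK.1.1
    have h2 := hzK.1.2
    exact ⟨by simpa using h1 i, by simpa using h2 i⟩
  have hzmono : Monotone z := hzK.2
  have key0 : ∀ i, z i ≠ 0 := by
    intro i h0
    apply hGz_ne
    simp only [hGdef]
    exact Finset.prod_eq_zero (mem_univ i)
      (by rw [h0, Real.zero_rpow hb.ne', zero_mul, zero_mul])
  have key1 : ∀ i, z i ≠ 1 := by
    intro i h1
    apply hGz_ne
    simp only [hGdef]
    exact Finset.prod_eq_zero (mem_univ i)
      (by rw [h1, sub_self, Real.zero_rpow ha.ne', mul_zero, zero_mul])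
  have keyinj : Function.Injective z := by
    intro i j hij
    by_contra hne
    apply hGz_ne
    simp only [hGdef]
    apply Finset.prod_eq_zero (mem_univ i)
    rw [mul_eq_zero]
    right
    exact Finset.prod_eq_zero (Finset.mem_erase.2 ⟨fun e => hne e.symm, mem_univ j⟩)
      (by rw [hij, sub_self, abs_zero, Real.zero_rpow hc2.ne'])
  have hzpos : ∀ i, 0 < z i := fun i => (hz01 i).1.lt_of_ne (Ne.symm (key0 i))
  have hzlt1 : ∀ i, z i < 1 := fun i => (hz01 i).2.lt_of_ne (key1 i)
  have hzsm : StrictMono z := hzmono.strictMono_of_injective keyinj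
  refine ⟨z, fun i => ⟨hzpos i, hzlt1 i⟩, hzsm, ?_⟩
  intro i
  set h : ℝ → ℝ := fun t => b * Real.log t + a * Real.log (1 - t)
      + c * ∑ j ∈ univ.erase i, Real.log (t - z j) with hhdef
  set D : ℝ := ∏ j ∈ univ.erase i,
      ((z j) ^ b * (1 - z j) ^ a * ∏ k ∈ (univ.erase j).erase i, |z j - z k| ^ (c/2))
    with hDdef
  set Q : ℝ → Prop := fun t => 0 < t ∧ t < 1 ∧ ∀ j, (j < i → z j < t) ∧ (i < j → t < z j)
    with hQdef
  have hQzi : Q (z i) := ⟨hzpos i, hzlt1 i, fun j => ⟨fun hj => hzsm hj, fun hj => hzsm hj⟩⟩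
  have hQev : ∀ᶠ t in nhds (z i), Q t := by
    have e1 : ∀ᶠ t in nhds (z i), 0 < t := eventually_gt_nhds (hzpos i)
    have e2 : ∀ᶠ t in nhds (z i), t < 1 := eventually_lt_nhds (hzlt1 i)
    have e3 : ∀ᶠ t in nhds (z i), ∀ j, (j < i → z j < t) ∧ (i < j → t < z j) := by
      rw [Filter.eventually_all]
      intro j
      rcases lt_trichotomy j i with hj | hj | hj
      · filter_upwards [eventually_gt_nhds (hzsm hj)] with t ht
        exact ⟨fun _ => ht, fun hij => absurd hj (asymm hij)⟩
      · subst hj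
        exact Filter.Eventually.of_forall fun t =>
          ⟨fun hj => absurd hj (lt_irrefl j), fun hj => absurd hj (lt_irrefl j)⟩
      · filter_upwards [eventually_lt_nhds (hzsm hj)] with t ht
        exact ⟨fun hij => absurd hj (asymm hij), fun _ => ht⟩
    filter_upwards [e1, e2, e3] with t h1 h2 h3
    exact ⟨h1, h2, h3⟩
  have hne' : ∀ t, Q t → ∀ j ∈ univ.erase i, t - z j ≠ 0 := by
    intro t ht j hj
    have hji : j ≠ i := (Finset.mem_erase.1 hj).1
    rcases lt_or_gt_of_ne hji with hlt | hgt
    · exact sub_ne_zero.2 (ne_of_gt ((ht.2.2 j).1 hlt))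
    · exact sub_ne_zero.2 (ne_of_lt ((ht.2.2 j).2 hgt))
  have hQmem : ∀ t, Q t → Function.update z i t ∈ K := by
    intro t ht
    obtain ⟨ht0, ht1, htj⟩ := ht
    refine ⟨Set.mem_Icc.2 ⟨Pi.le_def.mpr fun j => ?_, Pi.le_def.mpr fun j => ?_⟩, ?_⟩
    · rw [Function.update_apply]
      split_ifs with hj
      · simpa using ht0.le
      · simpa using (hz01 j).1
    · rw [Function.update_apply]
      split_ifs with hj
      · simpa using ht1.le
      · simpa using (hz01 j).2
    · intro p q hpq
      rw [Function.update_apply, Function.update_apply]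
      split_ifs with hp hq hq
      · exact le_rfl
      · have : i < q := lt_of_le_of_ne (hp ▸ hpq) (Ne.symm hq)
        exact ((htj q).2 this).le
      · have : p < i := lt_of_le_of_ne (hq ▸ hpq) hp
        exact ((htj p).1 this).le
      · exact hzmono hpq
  have hfact : ∀ t, Q t → G (Function.update z i t) = Real.exp (h t) * D := by
    intro t ht
    obtain ⟨ht0, ht1, htj⟩ := ht
    have habs : ∀ j ∈ univ.erase i, 0 < |t - z j| :=
      fun j hj => abs_pos.2 (hne' t ⟨ht0, ht1, htj⟩ j hj)
    have hexp : Real.exp (h t) = t ^ b * (1 - t) ^ a * ∏ j ∈ univ.erase i, |t - z j| ^ c := by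
      simp only [hhdef]
      rw [Real.exp_add, Real.exp_add, Finset.mul_sum, Real.exp_sum]
      congr 1
      · congr 1
        · rw [Real.rpow_def_of_pos ht0, mul_comm]
        · rw [Real.rpow_def_of_pos (by linarith : (0:ℝ) < 1 - t), mul_comm]
      · refine Finset.prod_congr rfl fun j hj => ?_
        rw [Real.rpow_def_of_pos (habs j hj), Real.log_abs, mul_comm]
    have hyi : Function.update z i t i = t := Function.update_self i t z
    have hyj : ∀ j, j ≠ i → Function.update z i t j = z j :=
      fun j hj => Function.update_of_ne hj t z
    have hGy : G (Function.update z i t)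
        = (t ^ b * (1 - t) ^ a * ∏ k ∈ univ.erase i, |t - z k| ^ (c/2)) *
          ((∏ j ∈ univ.erase i, |z j - t| ^ (c/2)) * D) := by
      simp only [hGdef]
      rw [← Finset.mul_prod_erase univ _ (mem_univ i)]
      congr 1
      · rw [hyi]
        congr 1
        exact Finset.prod_congr rfl fun k hk => by
          rw [hyj k (Finset.mem_erase.1 hk).1]
      · rw [hDdef, ← Finset.prod_mul_distrib]
        refine Finset.prod_congr rfl fun j hj => ?_
        have hji : j ≠ i := (Finset.mem_erase.1 hj).1
        rw [hyj j hji]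
        have hsplit : ∏ k ∈ univ.erase j, |z j - Function.update z i t k| ^ (c/2)
            = |z j - t| ^ (c/2) * ∏ k ∈ (univ.erase j).erase i, |z j - z k| ^ (c/2) := by
          rw [← Finset.mul_prod_erase (univ.erase j) _
            (Finset.mem_erase.2 ⟨Ne.symm hji, mem_univ i⟩)]
          congr 1
          · rw [hyi]
          · exact Finset.prod_congr rfl fun k hk => by
              rw [hyj k (Finset.mem_erase.1 hk).1]
        rw [hsplit]
        ring
    rw [hGy, hexp]
    have hcc : ∏ j ∈ univ.erase i, |t - z j| ^ c
        = (∏ j ∈ univ.erase i, |t - z j| ^ (c/2)) * ∏ j ∈ univ.erase i, |z j - t| ^ (c/2) := by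
      rw [← Finset.prod_mul_distrib]
      refine Finset.prod_congr rfl fun j hj => ?_
      rw [abs_sub_comm (z j) t, ← Real.rpow_add (habs j hj)]
      norm_num
    rw [hcc]
    ring
  have hD : 0 < D := by
    rw [hDdef]
    apply Finset.prod_pos
    intro j hj
    have h1 := Real.rpow_pos_of_pos (hzpos j) b
    have h2 := Real.rpow_pos_of_pos (by linarith [hzlt1 j] : (0:ℝ) < 1 - z j) a
    have h3 : 0 < ∏ k ∈ (univ.erase j).erase i, |z j - z k| ^ (c/2) := by
      apply Finset.prod_pos
      intro k hk
      have hkj : k ≠ j := (Finset.mem_erase.1 (Finset.mem_erase.1 hk).2).1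
      exact Real.rpow_pos_of_pos
        (abs_pos.2 (sub_ne_zero.2 fun e => hkj (keyinj e).symm)) _
    exact mul_pos (mul_pos h1 h2) h3
  have hlm : IsLocalMax h (z i) := by
    filter_upwards [hQev] with t ht
    have h1 : G (Function.update z i t) ≤ G z := hzmax (hQmem t ht)
    rw [hfact t ht] at h1
    have h2 : G z = Real.exp (h (z i)) * D := by
      have := hfact (z i) hQzi
      rwa [Function.update_eq_self] at this
    rw [h2] at h1
    exact Real.exp_le_exp.1 ((mul_le_mul_iff_of_pos_right hD).1 h1)
  have hderiv : HasDerivAt h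
      (b * (z i)⁻¹ + a * (-(1 - z i)⁻¹) + c * ∑ j ∈ univ.erase i, (z i - z j)⁻¹) (z i) := by
    have d1 : HasDerivAt (fun t : ℝ => Real.log t) (z i)⁻¹ (z i) :=
      Real.hasDerivAt_log (hzpos i).ne'
    have d2 : HasDerivAt (fun t : ℝ => Real.log (1 - t)) (-(1 - z i)⁻¹) (z i) := by
      have hd : HasDerivAt (fun t : ℝ => 1 - t) (-1) (z i) := (hasDerivAt_id (z i)).const_sub 1
      have := hd.log (by linarith [hzlt1 i] : (1:ℝ) - z i ≠ 0)
      simpa [neg_div, one_div] using this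
    have d3 : HasDerivAt (fun t : ℝ => ∑ j ∈ univ.erase i, Real.log (t - z j))
        (∑ j ∈ univ.erase i, (z i - z j)⁻¹) (z i) := by
      apply HasDerivAt.fun_sum
      intro j hj
      have hd : HasDerivAt (fun t : ℝ => t - z j) 1 (z i) := (hasDerivAt_id (z i)).sub_const (z j)
      have hzz : z i - z j ≠ 0 := hne' (z i) hQzi j hj
      simpa [one_div] using hd.log hzz
    exact ((d1.const_mul b).add (d2.const_mul a)).add (d3.const_mul c)
  have hz0 : b * (z i)⁻¹ + a * (-(1 - z i)⁻¹) + c * ∑ j ∈ univ.erase i, (z i - z j)⁻¹ = 0 :=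
    hlm.hasDerivAt_eq_zero hderiv
  have hsum : ∑ j ∈ univ.erase i, c / (z i - z j)
      = c * ∑ j ∈ univ.erase i, (z i - z j)⁻¹ := by
    rw [Finset.mul_sum]
    exact Finset.sum_congr rfl fun j _ => div_eq_mul_inv c _
  rw [hsum, div_eq_mul_inv a, div_eq_mul_inv b]
  linarith [hz0]
end

section
/- Let h be meromorphic near w ∈ ℂ and holomorphic at w, and J holomorphic near w with J'(w) ≠ 0. Then the residue at w of f(z) = h(z)/(J(z)-J(w))² equals h'(w)/J'(w)² - h(w)J''(w)/J'(w)³. -/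
open Complex Filter
lemma analyticAt_deriv' {f : ℂ → ℂ} {x : ℂ} (hf : AnalyticAt ℂ f x) :
    AnalyticAt ℂ (deriv f) x := by
  obtain ⟨s, hs, hsub⟩ := hf.eventually_analyticAt.exists_mem
  obtain ⟨t, hts, hto, hxt⟩ := mem_nhds_iff.mp hs
  exact (AnalyticOnNhd.deriv (fun y hy => hsub y (hts hy)) : AnalyticOnNhd ℂ (deriv f) t) x hxt

lemma analyticAt_dslope' {f : ℂ → ℂ} {x : ℂ} (hf : AnalyticAt ℂ f x) :
    AnalyticAt ℂ (dslope f x) x := by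
  obtain ⟨p, hp⟩ := hf
  exact ⟨p.fslope, hp.has_fpower_series_dslope_fslope⟩


/-- The residue of `f(z) = h(z)/(J(z) - J(w))²` at `w` (a pole of order at most 2)
equals `h'(w)/J'(w)² - h(w)J''(w)/J'(w)³`, expressed via the principal part:
`f` minus its principal part extends analytically across `w`. -/
theorem stmt_17 (h J : ℂ → ℂ) (w : ℂ)
    (hh : AnalyticAt ℂ h w) (hJ : AnalyticAt ℂ J w)
    (hJ' : deriv J w ≠ 0) :
    ∃ g : ℂ → ℂ, AnalyticAt ℂ g w ∧
      ∀ᶠ z in nhdsWithin w {w}ᶜ,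
        h z / (J z - J w) ^ 2 =
          (h w / (deriv J w) ^ 2) / (z - w) ^ 2 +
          (deriv h w / (deriv J w) ^ 2
            - h w * deriv (deriv J) w / (deriv J w) ^ 3) / (z - w) + g z := by
  set k : ℂ → ℂ := dslope J w with hk_def
  have hk : AnalyticAt ℂ k w := analyticAt_dslope' hJ
  have hkw : k w = deriv J w := dslope_same J w
  have hkw0 : k w ≠ 0 := hkw ▸ hJ'
  have hfac : ∀ z, J z - J w = (z - w) * k z := fun z => by
    have := sub_smul_dslope J w z
    simpa [smul_eq_mul] using this.symm
  -- deriv J near w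
  have hk' : AnalyticAt ℂ (deriv k) w := analyticAt_deriv' hk
  have hderivJ : deriv J =ᶠ[nhds w] fun z => k z + (z - w) * deriv k z := by
    filter_upwards [hk.eventually_analyticAt] with z hz
    have hdk : HasDerivAt k (deriv k z) z := hz.differentiableAt.hasDerivAt
    have h1 : HasDerivAt (fun y => J w + (y - w) * k y)
        (1 * k z + (z - w) * deriv k z) z := by
      exact (HasDerivAt.const_add _ (((hasDerivAt_id z).sub_const w).mul hdk))
    have h2 : HasDerivAt J (1 * k z + (z - w) * deriv k z) z :=
      h1.congr_of_eventuallyEq (Filter.Eventually.of_forall fun y => by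
        have := hfac y; linear_combination this)
    simpa using h2.deriv
  have hJ'' : deriv (deriv J) w = 2 * deriv k w := by
    rw [hderivJ.deriv_eq]
    have hdk : HasDerivAt k (deriv k w) w := hk.differentiableAt.hasDerivAt
    have hdk' : HasDerivAt (deriv k) (deriv (deriv k) w) w := hk'.differentiableAt.hasDerivAt
    have h2 : HasDerivAt (fun z => k z + (z - w) * deriv k z)
        (deriv k w + (1 * deriv k w + (w - w) * deriv (deriv k) w)) w :=
      hdk.add ((((hasDerivAt_id w).sub_const w).mul hdk'))
    rw [h2.deriv]; ring
  -- F
  set F : ℂ → ℂ := fun z => h z / k z ^ 2 with hF_def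
  have hF : AnalyticAt ℂ F w := hh.div (hk.pow 2) (pow_ne_zero 2 hkw0)
  have hFw : F w = h w / deriv J w ^ 2 := by simp [hF_def, hkw]
  have hF' : deriv F w = deriv h w / (deriv J w) ^ 2
      - h w * deriv (deriv J) w / (deriv J w) ^ 3 := by
    have hdh : HasDerivAt h (deriv h w) w := hh.differentiableAt.hasDerivAt
    have hdk : HasDerivAt k (deriv k w) w := hk.differentiableAt.hasDerivAt
    have hdk2 : HasDerivAt (fun z => k z ^ 2) (2 * k w ^ 1 * deriv k w) w := by
      simpa using hdk.fun_pow 2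
    have hdF : HasDerivAt F
        ((deriv h w * k w ^ 2 - h w * (2 * k w ^ 1 * deriv k w)) / (k w ^ 2) ^ 2) w :=
      hdh.div hdk2 (pow_ne_zero 2 hkw0)
    rw [hdF.deriv, hJ'', hkw]
    field_simp
  -- principal part decomposition of F
  set G1 : ℂ → ℂ := dslope F w with hG1_def
  have hG1 : AnalyticAt ℂ G1 w := analyticAt_dslope' hF
  have hG1w : G1 w = deriv F w := dslope_same F w
  refine ⟨dslope G1 w, analyticAt_dslope' hG1, ?_⟩
  have hne : ∀ᶠ z in nhdsWithin w {w}ᶜ, k z ≠ 0 :=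
    (hk.continuousAt.eventually_ne hkw0).filter_mono nhdsWithin_le_nhds
  filter_upwards [self_mem_nhdsWithin, hne] with z hz hkz
  have hzw : z - w ≠ 0 := sub_ne_zero.mpr hz
  have e1 : F z = F w + (z - w) * G1 z := by
    have := sub_smul_dslope F w z
    simp only [smul_eq_mul] at this
    linear_combination -this
  have e2 : G1 z = G1 w + (z - w) * dslope G1 w z := by
    have := sub_smul_dslope G1 w z
    simp only [smul_eq_mul] at this
    linear_combination -this
  rw [hfac z, ← hFw, ← hF', ← hG1w]
  rw [mul_pow]
  have : h z / ((z - w) ^ 2 * k z ^ 2) = F z / (z - w) ^ 2 := by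
    rw [hF_def, div_div, mul_comm]
  rw [this, e1, e2]
  field_simp
  ring
end
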